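/- (Thresholding consistency; core of Corollary 2.) Let (Ω, 𝓕, P) be a probability space, ι a finite type, T : ι → ℝ with T(e) ≥ 0 for all e, and define the edge set E = {e : T(e) > 0}. Let T̂_n : ι → Ω → ℝ be measurable for each n ∈ ℕ, and let (b_n) and (ρ_n) be sequences of positive reals with ρ_n → 0 and b_n/ρ_n → 0. Assume that for every e ∈ ι, |T̂_n(e) − T(e)| = O_P(b_n), i.e. for every ε > 0 there is M > 0 such that limsup_n P(|T̂_n(e) − T(e)| > M b_n) ≤ ε. Then P({ω : for all e ∈ ι, T̂_n(e)(ω) > ρ_n ⟺ T(e) > 0}) → 1 as n → ∞; that is, the thresholded edge set Ê_n = {e : T̂_n(e) > ρ_n} equals E with probability tending to one. -/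

import Mathlib

open MeasureTheory Filter


/-- Auxiliary: subadditivity of `limsup` in `ℝ≥0∞` along `atTop`. -/
lemma aux_limsup_add_le (u v : ℕ → ENNReal) :
    limsup (fun n => u n + v n) atTop ≤ limsup u atTop + limsup v atTop := by
  refine ENNReal.le_of_forall_pos_le_add fun ε hε htop => ?_
  have h2 : (0 : ENNReal) < (ε : ENNReal) / 2 :=
    ENNReal.half_pos (by exact_mod_cast hε.ne')
  have hut : limsup u atTop ≠ ⊤ := (le_self_add.trans_lt htop).ne
  have hvt : limsup v atTop ≠ ⊤ := (le_add_self.trans_lt htop).ne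
  have hu : limsup u atTop < limsup u atTop + (ε : ENNReal) / 2 :=
    ENNReal.lt_add_right hut h2.ne'
  have hv : limsup v atTop < limsup v atTop + (ε : ENNReal) / 2 :=
    ENNReal.lt_add_right hvt h2.ne'
  have hU := eventually_lt_of_limsup_lt hu
  have hV := eventually_lt_of_limsup_lt hv
  refine limsup_le_of_le (by isBoundedDefault) ?_
  filter_upwards [hU, hV] with n hun hvn
  calc u n + v n ≤ (limsup u atTop + (ε : ENNReal) / 2) +
        (limsup v atTop + (ε : ENNReal) / 2) := add_le_add hun.le hvn.le
    _ = limsup u atTop + limsup v atTop + ((ε : ENNReal) / 2 + (ε : ENNReal) / 2) := by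
        ring
    _ = limsup u atTop + limsup v atTop + (ε : ENNReal) := by
        rw [ENNReal.add_halves]

/-- Auxiliary: `limsup` of a finite sum is at most the sum of the `limsup`s. -/
lemma aux_limsup_sum_le {ι : Type*} (s : Finset ι) (f : ι → ℕ → ENNReal) :
    limsup (fun n => ∑ i ∈ s, f i n) atTop ≤ ∑ i ∈ s, limsup (f i) atTop := by
  classical
  induction s using Finset.induction with
  | empty => simp
  | insert _ _ h ih =>
    rename_i a s
    simp only [Finset.sum_insert h]
    exact le_trans (aux_limsup_add_le _ _) (add_le_add le_rfl ih)
/-- Thresholding consistency (core of Corollary 2 of the paper): if each statistic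
`T̂ₙ(e)` converges to `T(e) ≥ 0` at rate `O_P(bₙ)`, the threshold `ρₙ` tends to `0`,
and `bₙ/ρₙ → 0`, then the thresholded edge set `{e : T̂ₙ(e) > ρₙ}` equals the true
edge set `{e : T(e) > 0}` with probability tending to one. -/
theorem thresholding_consistency
    {Ω : Type*} [MeasurableSpace Ω] (μ : Measure Ω) [IsProbabilityMeasure μ]
    {ι : Type*} [Fintype ι]
    (T : ι → ℝ) (hT : ∀ e, 0 ≤ T e)
    (That : ℕ → ι → Ω → ℝ) (hmeas : ∀ n e, Measurable (That n e))
    (b ρ : ℕ → ℝ) (hb : ∀ n, 0 < b n) (hρpos : ∀ n, 0 < ρ n)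
    (hρ0 : Tendsto ρ atTop (nhds 0))
    (hbρ : Tendsto (fun n => b n / ρ n) atTop (nhds 0))
    (hOP : ∀ e : ι, ∀ ε > (0 : ℝ), ∃ M > (0 : ℝ),
      limsup (fun n => μ {ω | M * b n < |That n e ω - T e|}) atTop
        ≤ ENNReal.ofReal ε) :
    Tendsto (fun n => μ {ω | ∀ e : ι, (ρ n < That n e ω ↔ 0 < T e)})
      atTop (nhds 1) := by
  classical
  set G : ℕ → Set Ω := fun n => {ω | ∀ e : ι, (ρ n < That n e ω ↔ 0 < T e)} with hG
  have hGmeas : ∀ n, MeasurableSet (G n) := by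
    intro n
    have hGe : G n = ⋂ e, {ω | ρ n < That n e ω ↔ 0 < T e} := by
      ext ω; simp [hG, Set.mem_iInter]
    rw [hGe]
    refine MeasurableSet.iInter fun e => ?_
    by_cases h : 0 < T e
    · simp only [h, iff_true]
      exact measurableSet_lt measurable_const (hmeas n e)
    · simp only [h, iff_false, not_lt]
      exact measurableSet_le (hmeas n e) measurable_const
  have hb0 : Tendsto b atTop (nhds 0) := by
    have h := hbρ.mul hρ0
    rw [mul_zero] at h
    refine h.congr fun n => ?_
    exact div_mul_cancel₀ _ (hρpos n).ne'
  -- the complement of the good event has probability tending to zero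
  have key : Tendsto (fun n => μ (G n)ᶜ) atTop (nhds 0) := by
    have hls : limsup (fun n => μ (G n)ᶜ) atTop = 0 := by
      refine le_antisymm ?_ zero_le
      refine ENNReal.le_of_forall_pos_le_add fun ε hε _ => ?_
      rw [zero_add]
      set ε' : ℝ := (ε : ℝ) / (Fintype.card ι + 1) with hε'def
      have hcard : (0 : ℝ) ≤ Fintype.card ι := Nat.cast_nonneg _
      have hε' : 0 < ε' := by
        apply div_pos (by exact_mod_cast hε) (by positivity)
      choose M hMpos hMlim using fun e => hOP e ε' hε'
      set Mx : ℝ := 1 + ∑ e, M e with hMxdef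
      have hMxpos : 0 < Mx := by
        have : (0:ℝ) ≤ ∑ e, M e := Finset.sum_nonneg fun e _ => (hMpos e).le
        simp only [hMxdef]; linarith
      have hMle : ∀ e, M e ≤ Mx := by
        intro e
        have h1 : M e ≤ ∑ e, M e :=
          Finset.single_le_sum (fun e _ => (hMpos e).le) (Finset.mem_univ e)
        simp only [hMxdef]; linarith
      set A : ℕ → ι → Set Ω := fun n e => {ω | Mx * b n < |That n e ω - T e|} with hAdef
      have hA : ∀ e, limsup (fun n => μ (A n e)) atTop ≤ ENNReal.ofReal ε' := by
        intro e
        refine le_trans (limsup_le_limsup (Eventually.of_forall fun n =>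
          measure_mono ?_) (by isBoundedDefault) (by isBoundedDefault)) (hMlim e)
        intro ω hω
        exact lt_of_le_of_lt (mul_le_mul_of_nonneg_right (hMle e) (hb n).le) hω
      have h1 : ∀ᶠ n in atTop, Mx * b n < ρ n := by
        have hinv : (0:ℝ) < Mx⁻¹ := inv_pos.mpr hMxpos
        filter_upwards [hbρ.eventually_lt_const hinv] with n hn
        have hbn : b n < Mx⁻¹ * ρ n := (div_lt_iff₀ (hρpos n)).1 hn
        calc Mx * b n < Mx * (Mx⁻¹ * ρ n) := by
              exact mul_lt_mul_of_pos_left hbn hMxpos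
          _ = ρ n := by field_simp
      have h2 : ∀ᶠ n in atTop, ∀ e, 0 < T e → ρ n + Mx * b n < T e := by
        rw [eventually_all]
        intro e
        by_cases hTe : 0 < T e
        · have ht : Tendsto (fun n => ρ n + Mx * b n) atTop (nhds 0) := by
            have h := hρ0.add (hb0.const_mul Mx)
            rw [mul_zero, add_zero] at h
            exact h
          filter_upwards [ht.eventually_lt_const hTe] with n hn _
          exact hn
        · exact Eventually.of_forall fun n h => absurd h hTe
      have hsub : ∀ᶠ n in atTop, μ (G n)ᶜ ≤ ∑ e, μ (A n e) := by
        filter_upwards [h1, h2] with n h1n h2n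
        refine le_trans (measure_mono ?_) (measure_iUnion_fintype_le μ (A n))
        intro ω hω
        obtain ⟨e, he⟩ := not_forall.1 hω
        refine Set.mem_iUnion.2 ⟨e, ?_⟩
        show Mx * b n < |That n e ω - T e|
        by_cases hTe : 0 < T e
        · have hnot : ¬ ρ n < That n e ω := fun hc => he (iff_of_true hc hTe)
          push_neg at hnot
          have hgap := h2n e hTe
          rw [abs_sub_comm]
          calc Mx * b n < T e - ρ n := by linarith
            _ ≤ T e - That n e ω := by linarith
            _ ≤ |T e - That n e ω| := le_abs_self _
        · have hlt : ρ n < That n e ω := by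
            by_contra hc
            exact he (iff_of_false hc hTe)
          have hTe0 : T e = 0 := le_antisymm (not_lt.1 hTe) (hT e)
          calc Mx * b n < That n e ω := lt_trans h1n hlt
            _ ≤ |That n e ω - T e| := by rw [hTe0, sub_zero]; exact le_abs_self _
      calc limsup (fun n => μ (G n)ᶜ) atTop
          ≤ limsup (fun n => ∑ e, μ (A n e)) atTop :=
            limsup_le_limsup hsub (by isBoundedDefault) (by isBoundedDefault)
        _ ≤ ∑ e, limsup (fun n => μ (A n e)) atTop := aux_limsup_sum_le _ _
        _ ≤ ∑ _e : ι, ENNReal.ofReal ε' := Finset.sum_le_sum fun e _ => hA e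
        _ = (Fintype.card ι : ENNReal) * ENNReal.ofReal ε' := by
            simp [Finset.sum_const, nsmul_eq_mul, Finset.card_univ]
        _ = ENNReal.ofReal ((Fintype.card ι : ℝ) * ε') := by
            rw [ENNReal.ofReal_mul hcard, ENNReal.ofReal_natCast]
        _ ≤ (ε : ENNReal) := by
            rw [← ENNReal.ofReal_coe_nnreal]
            refine ENNReal.ofReal_le_ofReal ?_
            rw [hε'def]
            rw [mul_div_assoc']
            rw [div_le_iff₀ (by positivity)]
            have hε0 : (0:ℝ) ≤ (ε : ℝ) := ε.2
            nlinarith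
    have hli : liminf (fun n => μ (G n)ᶜ) atTop = 0 :=
      le_antisymm (le_trans (liminf_le_limsup (by isBoundedDefault)
        (by isBoundedDefault)) hls.le) zero_le
    exact tendsto_of_liminf_eq_limsup hli hls
  have hGn : ∀ n, μ (G n) = 1 - μ (G n)ᶜ := by
    intro n
    rw [measure_compl (hGmeas n) (measure_ne_top μ _), measure_univ,
      ENNReal.sub_sub_cancel ENNReal.one_ne_top prob_le_one]
  have h := ((ENNReal.continuous_sub_left ENNReal.one_ne_top).tendsto 0).comp key
  rw [tsub_zero] at h
  refine Tendsto.congr (fun n => ?_) h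
  exact (hGn n).symm
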